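/- Let b_j(θ; k) = (log λ_j)^k · e^{i(λ_j - π)(θ_r - θ_s)/2} · λ_j^{θ_r + θ_s} where λ_j = 2πj/n, k ∈ {0,1,2}, and |θ_r|, |θ_s| ≤ δ/(log n)^4 for a fixed δ > 0. Then there is a constant C (depending only on δ, k) such that for all n ≥ 2 and 1 ≤ j ≤ m < n/(4π): |b_j(θ;k) - b_{j+1}(θ;k)| ≤ C (log n)^k / j, uniformly over such θ. -/

import Mathlib

open Real Complex

/-- The weight `b_j(θ;k) = (log λ_j)^k e^{i(λ_j-π)(θ_r-θ_s)/2} λ_j^{θ_r+θ_s}`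
with `λ_j = 2πj/n`. -/
noncomputable def bWeight (n : ℕ) (k : ℕ) (θr θs : ℝ) (j : ℕ) : ℂ :=
  ((Real.log (2 * Real.pi * j / n)) ^ k : ℝ) *
    Complex.exp (Complex.I * ((2 * Real.pi * j / n - Real.pi) : ℝ) * ((θr - θs) / 2 : ℝ)) *
    (((2 * Real.pi * j / n) ^ (θr + θs) : ℝ) : ℂ)

lemma norm_exp_I (a : ℝ) : ‖Complex.exp (Complex.I * a)‖ = 1 := by
  simp [Complex.norm_exp]

lemma norm_exp_I_diff (a b : ℝ) :
    ‖Complex.exp (Complex.I * a) - Complex.exp (Complex.I * b)‖ ≤ 2 * |a - b| := by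
  have habs : ‖(a : ℂ) - (b : ℂ)‖ = |a - b| := by
    rw [← Complex.ofReal_sub, Complex.norm_real, Real.norm_eq_abs]
  have h1 : Complex.exp (Complex.I * a) - Complex.exp (Complex.I * b)
      = Complex.exp (Complex.I * b) * (Complex.exp (Complex.I * ((a - b : ℝ) : ℂ)) - 1) := by
    rw [mul_sub, ← Complex.exp_add]
    push_cast
    ring_nf
  rw [h1, norm_mul, norm_exp_I, one_mul]
  rcases le_or_gt (|a - b|) 1 with h | h
  · have := Complex.norm_exp_sub_one_le (x := Complex.I * ((a - b : ℝ) : ℂ))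
      (by simpa [habs] using h)
    simpa [habs] using this
  · calc ‖Complex.exp (Complex.I * ((a - b : ℝ) : ℂ)) - 1‖
        ≤ ‖Complex.exp (Complex.I * ((a - b : ℝ) : ℂ))‖ + 1 := by
          simpa using norm_sub_le _ (1 : ℂ)
      _ ≤ 2 * |a - b| := by rw [norm_exp_I]; linarith

lemma exp_one_sub_le' {t : ℝ} (ht : 0 ≤ t) : Real.exp t - 1 ≤ t * Real.exp t := by
  have h1 := Real.add_one_le_exp (-t)
  have h2 : Real.exp (-t) * Real.exp t = 1 := by rw [← Real.exp_add]; simp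
  nlinarith [Real.exp_pos t, mul_le_mul_of_nonneg_right h1 (Real.exp_pos t).le]

lemma exp_diff_le (K x y : ℝ) (hx : |x| ≤ K) (hy : |y| ≤ K) :
    |Real.exp x - Real.exp y| ≤ Real.exp K * |x - y| := by
  wlog h : y ≤ x generalizing x y
  · rw [abs_sub_comm, abs_sub_comm x y]; exact this y x hy hx (le_of_not_ge h)
  have hxK : x ≤ K := le_of_abs_le hx
  have h1 : Real.exp (x - y) - 1 ≤ (x - y) * Real.exp (x - y) := exp_one_sub_le' (by linarith)
  have h2 : Real.exp x - Real.exp y = Real.exp y * (Real.exp (x - y) - 1) := by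
    rw [mul_sub, ← Real.exp_add]; ring_nf
  have h3 : Real.exp y * (Real.exp (x - y) - 1) ≤ (x - y) * Real.exp x := by
    calc Real.exp y * (Real.exp (x - y) - 1) ≤ Real.exp y * ((x - y) * Real.exp (x - y)) :=
          mul_le_mul_of_nonneg_left h1 (Real.exp_pos y).le
      _ = (x - y) * (Real.exp y * Real.exp (x - y)) := by ring
      _ = (x - y) * Real.exp x := by rw [← Real.exp_add]; ring_nf
  rw [_root_.abs_of_nonneg (by nlinarith [Real.exp_le_exp.mpr h] : (0:ℝ) ≤ Real.exp x - Real.exp y),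
    _root_.abs_of_nonneg (by linarith : (0:ℝ) ≤ x - y)]
  calc Real.exp x - Real.exp y ≤ (x - y) * Real.exp x := by rw [h2]; exact h3
    _ ≤ Real.exp K * (x - y) := by nlinarith [Real.exp_le_exp.mpr hxK, Real.exp_pos x]

lemma pow_diff_le (x y B : ℝ) (hB : Real.log 2 ≤ B) (hx : |x| ≤ B) (hy : |y| ≤ B)
    (k : ℕ) (hk : k ∈ ({0,1,2} : Set ℕ)) :
    |x ^ k - y ^ k| ≤ (2 / Real.log 2) * B ^ k * |x - y| := by
  have hl2 : 0 < Real.log 2 := Real.log_pos (by norm_num)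
  have hB0 : 0 < B := lt_of_lt_of_le hl2 hB
  rcases hk with h | h | h
  · subst h; simp; positivity
  · subst h; simp only [pow_one]
    have hc : 1 ≤ 2 / Real.log 2 * B := by
      rw [div_mul_eq_mul_div, le_div_iff₀ hl2]; nlinarith
    exact le_mul_of_one_le_left (abs_nonneg _) hc
  · simp only [Set.mem_singleton_iff] at h; subst h
    have h1 : |x ^ 2 - y ^ 2| = |x + y| * |x - y| := by
      rw [← abs_mul]; ring_nf
    rw [h1]
    have h2 : |x + y| ≤ 2 * B := by
      calc |x + y| ≤ |x| + |y| := abs_add_le _ _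
        _ ≤ 2 * B := by linarith
    have h3 : 2 * B ≤ 2 / Real.log 2 * B ^ 2 := by
      rw [div_mul_eq_mul_div, le_div_iff₀ hl2]; nlinarith
    exact mul_le_mul_of_nonneg_right (le_trans h2 h3) (abs_nonneg _)

lemma bWeight_eq (n k : ℕ) (θr θs : ℝ) (j : ℕ) :
    bWeight n k θr θs j
    = (((Real.log (2 * Real.pi * j / n)) ^ k : ℝ) : ℂ) *
      Complex.exp (Complex.I * ((((2 * Real.pi * j / n - Real.pi)) * ((θr - θs) / 2) : ℝ) : ℂ)) *
      (((2 * Real.pi * j / n) ^ (θr + θs) : ℝ) : ℂ) := by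
  unfold bWeight
  congr 2
  push_cast
  ring

lemma bWeight_eq_succ (n k : ℕ) (θr θs : ℝ) (j : ℕ) :
    bWeight n k θr θs (j + 1)
    = (((Real.log (2 * Real.pi * ((j:ℝ) + 1) / n)) ^ k : ℝ) : ℂ) *
      Complex.exp (Complex.I *
        ((((2 * Real.pi * ((j:ℝ) + 1) / n - Real.pi)) * ((θr - θs) / 2) : ℝ) : ℂ)) *
      (((2 * Real.pi * ((j:ℝ) + 1) / n) ^ (θr + θs) : ℝ) : ℂ) := by
  rw [bWeight_eq]
  have hc : ((j:ℝ) + 1) = ((j + 1 : ℕ) : ℝ) := by push_cast; ring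
  rw [hc]

set_option maxHeartbeats 1600000 in
theorem stmt_6 (δ : ℝ) (hδ : 0 < δ) (k : ℕ) (hk : k ∈ ({0, 1, 2} : Set ℕ)) :
    ∃ C : ℝ, ∀ n m j : ℕ, 2 ≤ n → 1 ≤ j → j ≤ m → (m : ℝ) < n / (4 * Real.pi) →
      ∀ θr θs : ℝ, |θr| ≤ δ / (Real.log n) ^ 4 → |θs| ≤ δ / (Real.log n) ^ 4 →
        ‖bWeight n k θr θs j - bWeight n k θr θs (j + 1)‖ ≤ C * (Real.log n) ^ k / j := by
  have hπ : 0 < Real.pi := Real.pi_pos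
  have hl2 : 0 < Real.log 2 := Real.log_pos (by norm_num)
  set A : ℝ := δ / (Real.log 2) ^ 4 with hAdef
  set K : ℝ := 2 * δ / (Real.log 2) ^ 3 with hKdef
  set M : ℝ := Real.exp K with hMdef
  have hA0 : 0 < A := by positivity
  have hK0 : 0 < K := by positivity
  have hM0 : 0 < M := Real.exp_pos _
  refine ⟨M * (2 / Real.log 2 + 3 * A), ?_⟩
  intro n m j hn hj hjm hm θr θs hθr hθs
  have hn0 : (0:ℝ) < n := by positivity
  have hj0 : (1:ℝ) ≤ (j:ℝ) := by exact_mod_cast hj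
  have hjpos : (0:ℝ) < (j:ℝ) := by linarith
  have hn2 : (2:ℝ) ≤ (n:ℝ) := by exact_mod_cast hn
  have hlogn : Real.log 2 ≤ Real.log n := Real.log_le_log (by norm_num) hn2
  have hlogn0 : 0 < Real.log n := lt_of_lt_of_le hl2 hlogn
  -- the frequencies
  set x : ℝ := 2 * Real.pi * (j:ℝ) / n with hxdef
  set y : ℝ := 2 * Real.pi * ((j:ℝ) + 1) / n with hydef
  have hx0 : 0 < x := by
    rw [hxdef]; exact div_pos (mul_pos (by positivity) hjpos) hn0
  have hy0 : 0 < y := by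
    rw [hydef]; exact div_pos (mul_pos (by positivity) (by linarith)) hn0
  have h4πj : 4 * Real.pi * (j:ℝ) < n := by
    have hjm' : (j:ℝ) ≤ (m:ℝ) := by exact_mod_cast hjm
    have : (j:ℝ) < n / (4 * Real.pi) := lt_of_le_of_lt hjm' hm
    rw [lt_div_iff₀ (by positivity)] at this
    linarith
  have hy1 : y < 1 := by
    rw [hydef, div_lt_one hn0]
    nlinarith [mul_nonneg hπ.le (by linarith : (0:ℝ) ≤ (j:ℝ) - 1)]
  have hxy : x < y := by
    rw [hxdef, hydef, div_lt_div_iff₀ hn0 hn0]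
    nlinarith [mul_pos hπ hn0]
  have hx1 : x < 1 := lt_trans hxy hy1
  -- log bounds
  have hLx : |Real.log x| ≤ Real.log n := by
    have hnx : (n:ℝ) * x = 2 * Real.pi * j := by rw [hxdef]; field_simp
    have h1 : 0 ≤ Real.log ((n:ℝ) * x) := Real.log_nonneg (by
      rw [hnx]
      nlinarith [Real.pi_gt_three,
        mul_le_mul_of_nonneg_left hj0 Real.pi_pos.le])
    rw [Real.log_mul hn0.ne' hx0.ne'] at h1
    have h2 : Real.log x < 0 := Real.log_neg hx0 hx1
    rw [abs_le]; constructor <;> linarith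
  have hLy : |Real.log y| ≤ Real.log n := by
    have hny : (n:ℝ) * y = 2 * Real.pi * ((j:ℝ) + 1) := by rw [hydef]; field_simp
    have h1 : 0 ≤ Real.log ((n:ℝ) * y) := Real.log_nonneg (by
      rw [hny]
      nlinarith [Real.pi_gt_three,
        mul_le_mul_of_nonneg_left (show (1:ℝ) ≤ (j:ℝ) + 1 by linarith) Real.pi_pos.le])
    rw [Real.log_mul hn0.ne' hy0.ne'] at h1
    have h2 : Real.log y < 0 := Real.log_neg hy0 hy1
    rw [abs_le]; constructor <;> linarith
  have hD : |Real.log x - Real.log y| ≤ 1 / j := by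
    have hyx : y / x = ((j:ℝ) + 1) / j := by
      rw [div_eq_div_iff hx0.ne' hjpos.ne', hxdef, hydef]
      field_simp
    have h1 : Real.log y - Real.log x = Real.log (y / x) :=
      (Real.log_div hy0.ne' hx0.ne').symm
    have h2 : Real.log (y / x) ≤ y / x - 1 := Real.log_le_sub_one_of_pos (by positivity)
    have h3 : y / x - 1 = 1 / j := by rw [hyx]; field_simp; ring
    have h4 : Real.log x ≤ Real.log y := Real.log_le_log hx0 hxy.le
    rw [abs_sub_comm, _root_.abs_of_nonneg (by linarith : (0:ℝ) ≤ Real.log y - Real.log x), h1]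
    linarith [h2]
  -- the θ quantities
  set φ : ℝ := (θr - θs) / 2 with hφdef
  set σ : ℝ := θr + θs with hσdef
  have hδn : δ / (Real.log n) ^ 4 ≤ A := by
    rw [hAdef]
    gcongr
  have hφA : |φ| ≤ A := by
    rw [hφdef]
    rw [abs_div, _root_.abs_two]
    have : |θr - θs| ≤ 2 * (δ / (Real.log n) ^ 4) := by
      calc |θr - θs| ≤ |θr| + |θs| := abs_sub θr θs
        _ ≤ 2 * (δ / (Real.log n) ^ 4) := by linarith
    linarith [hδn]
  have hσn : |σ| ≤ 2 * δ / (Real.log n) ^ 4 := by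
    rw [hσdef]
    calc |θr + θs| ≤ |θr| + |θs| := abs_add_le _ _
      _ ≤ 2 * δ / (Real.log n) ^ 4 := by rw [mul_div_assoc]; linarith
  have hσA : |σ| ≤ 2 * A := by
    refine hσn.trans ?_
    rw [hAdef, mul_div_assoc]
    gcongr
  have hKx : |σ * Real.log x| ≤ K := by
    rw [abs_mul]
    calc |σ| * |Real.log x| ≤ (2 * δ / (Real.log n) ^ 4) * Real.log n :=
          mul_le_mul hσn hLx (abs_nonneg _) (by positivity)
      _ = 2 * δ / (Real.log n) ^ 3 := by field_simp
      _ ≤ K := by rw [hKdef]; gcongr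
  have hKy : |σ * Real.log y| ≤ K := by
    rw [abs_mul]
    calc |σ| * |Real.log y| ≤ (2 * δ / (Real.log n) ^ 4) * Real.log n :=
          mul_le_mul hσn hLy (abs_nonneg _) (by positivity)
      _ = 2 * δ / (Real.log n) ^ 3 := by field_simp
      _ ≤ K := by rw [hKdef]; gcongr
  -- rewrite bWeight
  rw [bWeight_eq, bWeight_eq_succ, ← hxdef, ← hydef, ← hφdef, ← hσdef]
  -- abbreviations for the three factors
  set a : ℝ := Real.log x with hadef
  set b : ℝ := Real.log y with hbdef
  set E1 : ℂ := Complex.exp (Complex.I * (((x - Real.pi) * φ : ℝ) : ℂ)) with hE1def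
  set E2 : ℂ := Complex.exp (Complex.I * (((y - Real.pi) * φ : ℝ) : ℂ)) with hE2def
  have key : ((a ^ k : ℝ) : ℂ) * E1 * ((x ^ σ : ℝ) : ℂ)
      - ((b ^ k : ℝ) : ℂ) * E2 * ((y ^ σ : ℝ) : ℂ)
      = ((a ^ k - b ^ k : ℝ) : ℂ) * E1 * ((x ^ σ : ℝ) : ℂ)
        + ((b ^ k : ℝ) : ℂ) * (E1 - E2) * ((x ^ σ : ℝ) : ℂ)
        + ((b ^ k : ℝ) : ℂ) * E2 * (((x ^ σ - y ^ σ : ℝ) : ℝ) : ℂ) := by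
    push_cast
    ring
  -- norm bounds for the pieces
  have hP1 : |x ^ σ| ≤ M := by
    rw [_root_.abs_of_nonneg (Real.rpow_nonneg hx0.le σ), Real.rpow_def_of_pos hx0]
    exact Real.exp_le_exp.mpr (le_of_abs_le (by rwa [mul_comm] at hKx))
  have hPdiff : |x ^ σ - y ^ σ| ≤ M * (2 * A * (1 / j)) := by
    rw [Real.rpow_def_of_pos hx0, Real.rpow_def_of_pos hy0]
    calc |Real.exp (Real.log x * σ) - Real.exp (Real.log y * σ)|
        ≤ Real.exp K * |Real.log x * σ - Real.log y * σ| := by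
          apply exp_diff_le <;> rw [mul_comm] at hKx hKy <;> assumption
      _ = M * (|σ| * |Real.log x - Real.log y|) := by
          rw [hMdef, ← abs_mul]; ring_nf
      _ ≤ M * (2 * A * (1 / j)) := by
          apply mul_le_mul_of_nonneg_left _ hM0.le
          exact mul_le_mul hσA hD (abs_nonneg _) (by positivity)
  have hE1n : ‖E1‖ = 1 := norm_exp_I _
  have hE2n : ‖E2‖ = 1 := norm_exp_I _
  have hEdiff : ‖E1 - E2‖ ≤ A * (1 / j) := by
    calc ‖E1 - E2‖ ≤ 2 * |(x - Real.pi) * φ - (y - Real.pi) * φ| := norm_exp_I_diff _ _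
      _ = 2 * (|φ| * |y - x|) := by
          rw [← abs_mul]
          congr 1
          rw [← abs_neg]
          congr 1
          ring
      _ ≤ 2 * (A * (1 / (2 * j))) := by
          apply mul_le_mul_of_nonneg_left _ (by norm_num)
          apply mul_le_mul hφA _ (abs_nonneg _) hA0.le
          rw [_root_.abs_of_nonneg (by linarith : (0:ℝ) ≤ y - x)]
          have hyx : y - x = 2 * Real.pi / n := by rw [hxdef, hydef]; field_simp; ring
          rw [hyx, div_le_div_iff₀ hn0 (by positivity)]
          nlinarith
      _ = A * (1 / j) := by field_simp
  have hbk : |b ^ k| ≤ (Real.log n) ^ k := by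
    rw [_root_.abs_pow]; exact pow_le_pow_left₀ (abs_nonneg _) hLy k
  have hak : |a ^ k - b ^ k| ≤ 2 / Real.log 2 * (Real.log n) ^ k * (1 / j) := by
    calc |a ^ k - b ^ k| ≤ 2 / Real.log 2 * (Real.log n) ^ k * |a - b| :=
          pow_diff_le a b (Real.log n) hlogn hLx hLy k hk
      _ ≤ 2 / Real.log 2 * (Real.log n) ^ k * (1 / j) := by
          apply mul_le_mul_of_nonneg_left hD
          positivity
  -- assemble
  rw [key]
  have hpowpos : (0:ℝ) ≤ (Real.log n) ^ k := by positivity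
  calc ‖((a ^ k - b ^ k : ℝ) : ℂ) * E1 * ((x ^ σ : ℝ) : ℂ)
        + ((b ^ k : ℝ) : ℂ) * (E1 - E2) * ((x ^ σ : ℝ) : ℂ)
        + ((b ^ k : ℝ) : ℂ) * E2 * (((x ^ σ - y ^ σ : ℝ) : ℝ) : ℂ)‖
      ≤ ‖((a ^ k - b ^ k : ℝ) : ℂ) * E1 * ((x ^ σ : ℝ) : ℂ)‖
        + ‖((b ^ k : ℝ) : ℂ) * (E1 - E2) * ((x ^ σ : ℝ) : ℂ)‖
        + ‖((b ^ k : ℝ) : ℂ) * E2 * (((x ^ σ - y ^ σ : ℝ) : ℝ) : ℂ)‖ := norm_add₃_le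
    _ ≤ (2 / Real.log 2 * (Real.log n) ^ k * (1 / j)) * 1 * M
        + (Real.log n) ^ k * (A * (1 / j)) * M
        + (Real.log n) ^ k * 1 * (M * (2 * A * (1 / j))) := by
        have hc1 : (0:ℝ) ≤ 2 / Real.log 2 * Real.log n ^ k * (1 / j) := by positivity
        gcongr ?_ + ?_ + ?_
        · simp only [norm_mul, Complex.norm_real, Real.norm_eq_abs, hE1n]
          have h1 : |a ^ k - b ^ k| * 1 ≤ 2 / Real.log 2 * Real.log n ^ k * (1 / j) * 1 := by
            rw [mul_one, mul_one]; exact hak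
          exact mul_le_mul h1 hP1 (abs_nonneg _) (by positivity)
        · simp only [norm_mul, Complex.norm_real, Real.norm_eq_abs]
          have h1 : |b ^ k| * ‖E1 - E2‖ ≤ Real.log n ^ k * (A * (1 / j)) :=
            mul_le_mul hbk hEdiff (norm_nonneg _) hpowpos
          exact mul_le_mul h1 hP1 (abs_nonneg _) (by positivity)
        · simp only [norm_mul, Complex.norm_real, Real.norm_eq_abs, hE2n]
          have h1 : |b ^ k| * 1 ≤ Real.log n ^ k * 1 := by
            rw [mul_one, mul_one]; exact hbk
          exact mul_le_mul h1 hPdiff (abs_nonneg _) (by positivity)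
    _ = M * (2 / Real.log 2 + 3 * A) * (Real.log n) ^ k / j := by
        field_simp
        ring
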